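/- Let B be a C*-algebra, b ∈ B a positive element with ‖b‖ = 1 whose spectrum is infinite, and ρ a state on B. Then for every n ≥ 1 there exists a positive element z in the C*-subalgebra C*(b) generated by b with ‖z‖ = 1 and ρ(z²) ≤ 1/n. -/

import Mathlib

noncomputable section

open scoped ContinuousMapZero
open NonUnitalStarAlgebra

lemma cfcn_mem_closure_adjoin {A : Type*} [NonUnitalCStarAlgebra A] {a : A}
    (ha : IsSelfAdjoint a) (f : ℝ → ℝ) :
    cfcₙ f a ∈ closure ((NonUnitalStarAlgebra.adjoin ℂ {a} : NonUnitalStarSubalgebra ℂ A) : Set A) := by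
  by_cases hf : ContinuousOn f (quasispectrum ℝ a) ∧ f 0 = 0
  · obtain ⟨hf, hf0⟩ := hf
    rw [cfcₙ_apply f a]
    set φ := cfcₙHom (R := ℝ) ha with hφ
    suffices H : ∀ g : C(quasispectrum ℝ a, ℝ)₀,
        φ g ∈ closure ((NonUnitalStarAlgebra.adjoin ℂ {a} : NonUnitalStarSubalgebra ℂ A) : Set A) by
      exact H _
    intro g₀
    have h₁ : Set.range φ ⊆ closure (φ '' (adjoin ℝ {(ContinuousMapZero.id (quasispectrum ℝ a) : C(quasispectrum ℝ a, ℝ)₀)} : NonUnitalStarSubalgebra ℝ C(quasispectrum ℝ a, ℝ)₀)) :=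
      (cfcₙHom_isClosedEmbedding (R := ℝ) ha).continuous.range_subset_closure_image_dense
      (ContinuousMapZero.adjoin_id_dense (s := quasispectrum ℝ a))
    have h₁' := h₁ (Set.mem_range_self g₀)
    refine closure_minimal ?_ isClosed_closure h₁'
    intro x hx
    simp only [Set.mem_image, SetLike.mem_coe] at hx
    obtain ⟨g, hg, rfl⟩ := hx
    have h₂ : φ g ∈ (NonUnitalStarAlgebra.adjoin ℝ {a} : NonUnitalStarSubalgebra ℝ A) := by
      have : NonUnitalStarSubalgebra.map (φ : C(quasispectrum ℝ a, ℝ)₀ →⋆ₙₐ[ℝ] A)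
          (adjoin ℝ {(ContinuousMapZero.id (quasispectrum ℝ a) : C(quasispectrum ℝ a, ℝ)₀)}) ≤ adjoin ℝ {a} := by
        rw [NonUnitalStarSubalgebra.map_le]
        apply NonUnitalStarAlgebra.adjoin_le
        apply Set.singleton_subset_iff.mpr
        rw [SetLike.mem_coe, NonUnitalStarSubalgebra.mem_comap]
        have : φ (ContinuousMapZero.id (quasispectrum ℝ a)) = a := cfcₙHom_id ha
        rw [this]
        exact self_mem_adjoin_singleton ℝ a
      exact this ⟨g, hg, rfl⟩
    have h₃ : φ g ∈ (NonUnitalStarAlgebra.adjoin ℂ {a} : NonUnitalStarSubalgebra ℂ A) := by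
      refine NonUnitalStarAlgebra.adjoin_induction (R := ℝ)
        (fun x hx => NonUnitalStarAlgebra.subset_adjoin ℂ _ hx)
        (fun x y _ _ hx hy => add_mem hx hy) (zero_mem _)
        (fun x y _ _ hx hy => mul_mem hx hy)
        (fun r x _ hx => ?_) (fun x _ hx => star_mem hx) h₂
      rw [show r • x = (r : ℂ) • x from (algebraMap_smul ℂ r x).symm]
      exact SMulMemClass.smul_mem _ hx
    exact subset_closure h₃
  · rw [cfcₙ_apply_of_not_and_and]
    · exact subset_closure (zero_mem _)
    · tauto

/-- A state on a C*-algebra: a positive continuous linear functional of norm one. -/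
def IsState {B : Type*} [NonUnitalCStarAlgebra B] (ρ : B →L[ℂ] ℂ) : Prop :=
  ‖ρ‖ = 1 ∧ ∀ b : B, 0 ≤ (ρ (star b * b)).re ∧ (ρ (star b * b)).im = 0

theorem statement18
    {B : Type*} [NonUnitalCStarAlgebra B]
    (ρ : B →L[ℂ] ℂ) (hρ : IsState ρ)
    (b : B) (hbpos : ∃ c : B, b = star c * c) (hbnorm : ‖b‖ = 1)
    (hbspec : (quasispectrum ℂ b).Infinite)
    (n : ℕ) (hn : 1 ≤ n) :
    ∃ z ∈ closure ((NonUnitalStarAlgebra.adjoin ℂ {b} : NonUnitalStarSubalgebra ℂ B) : Set B),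
      (∃ c : B, z = star c * c) ∧ ‖z‖ = 1 ∧ (ρ (z * z)).re ≤ 1 / n := by
  obtain ⟨hρ1, hρpos⟩ := hρ
  have hsa : IsSelfAdjoint b := by
    obtain ⟨c, rfl⟩ := hbpos; exact IsSelfAdjoint.star_mul_self c
  have hres : QuasispectrumRestricts b Complex.reCLM :=
    (isSelfAdjoint_iff_isStarNormal_and_quasispectrumRestricts.mp hsa).2
  have hSinf : (quasispectrum ℝ b).Infinite := by
    intro hfin
    exact hbspec (hres.algebraMap_image ▸ hfin.image _)
  have hS0 : ∀ x ∈ quasispectrum ℝ b, 0 ≤ x := by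
    obtain ⟨c, hc⟩ := hbpos
    intro x hx
    rw [Unitization.quasispectrum_eq_spectrum_inr' ℝ ℂ, hc, Unitization.inr_mul,
      Unitization.inr_star] at hx
    exact spectrum_star_mul_self_nonneg x hx
  -- points
  have hS' : ((quasispectrum ℝ b) \ {0}).Infinite := hSinf.diff (Set.finite_singleton 0)
  set e := hS'.natEmbedding with he
  set c : Fin (n+1) → ℝ := fun i => (e i.val : ℝ) with hc
  have hc_mem : ∀ i, c i ∈ quasispectrum ℝ b := fun i => ((e i.val).2).1
  have hc_ne : ∀ i, c i ≠ 0 := fun i => ((e i.val).2).2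
  have hc_pos : ∀ i, 0 < c i := fun i => lt_of_le_of_ne (hS0 _ (hc_mem i)) (Ne.symm (hc_ne i))
  have hc_inj : Function.Injective c := by
    intro i j h
    exact Fin.val_injective (e.injective (Subtype.coe_injective h))
  -- epsilon
  have hpairs : (Finset.univ.filter (fun p : Fin (n+1) × Fin (n+1) => p.1 ≠ p.2)).Nonempty := by
    refine ⟨(⟨0, by omega⟩, ⟨1, by omega⟩), ?_⟩
    simp [Finset.mem_filter, Fin.ext_iff]
  set gap := (Finset.univ.filter (fun p : Fin (n+1) × Fin (n+1) => p.1 ≠ p.2)).inf' hpairs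
    (fun p => |c p.1 - c p.2|) with hgapdef
  have hgap_pos : 0 < gap := by
    rw [hgapdef, Finset.lt_inf'_iff]
    intro p hp
    have h1 : p.1 ≠ p.2 := (Finset.mem_filter.mp hp).2
    have h2 : c p.1 ≠ c p.2 := fun h => h1 (hc_inj h)
    exact abs_pos.mpr (sub_ne_zero.mpr h2)
  set mn := Finset.univ.inf' Finset.univ_nonempty c with hmndef
  have hmn_pos : 0 < mn := by
    rw [hmndef, Finset.lt_inf'_iff]
    exact fun i _ => hc_pos i
  set ε := min (gap/2) mn with hεdef
  have hε : 0 < ε := lt_min (by linarith) hmn_pos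
  have hεle : ∀ i, ε ≤ c i := fun i =>
    (min_le_right _ _).trans (Finset.inf'_le _ (Finset.mem_univ i))
  have h2ε : ∀ i j, i ≠ j → 2 * ε ≤ |c i - c j| := by
    intro i j hij
    have h1 : ε ≤ gap / 2 := min_le_left _ _
    have h2 : gap ≤ |c i - c j| :=
      Finset.inf'_le (f := fun p : Fin (n+1) × Fin (n+1) => |c p.1 - c p.2|)
        (b := (i, j)) (by simp [hij])
    linarith
  -- bump functions
  set f : Fin (n+1) → ℝ → ℝ := fun i t => max 0 (1 - |t - c i| / ε) with hfdef
  have hfc : ∀ i, Continuous (f i) := fun i => continuous_const.max (by fun_prop)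
  have hf_nonneg : ∀ i t, 0 ≤ f i t := fun i t => le_max_left _ _
  have hf_le_one : ∀ i t, f i t ≤ 1 := by
    intro i t
    have h1 : 0 ≤ |t - c i| / ε := div_nonneg (abs_nonneg _) hε.le
    exact max_le zero_le_one (by linarith)
  have hf0 : ∀ i, f i 0 = 0 := by
    intro i
    have h1 : |0 - c i| = c i := by rw [zero_sub, abs_neg, abs_of_pos (hc_pos i)]
    have h2 : (1:ℝ) ≤ c i / ε := (one_le_div hε).mpr (hεle i)
    rw [hfdef]
    simp only [h1]
    rw [max_eq_left (by linarith)]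
  have hf1 : ∀ i, f i (c i) = 1 := by
    intro i
    rw [hfdef]
    simp
  have hsmall : ∀ i t, f i t ≠ 0 → |t - c i| < ε := by
    intro i t ht
    by_contra h
    push_neg at h
    apply ht
    have h1 : (1:ℝ) ≤ |t - c i| / ε := (one_le_div hε).mpr h
    rw [hfdef]
    simp only
    rw [max_eq_left (by linarith)]
  have hdisj : ∀ i j, i ≠ j → ∀ t, f i t * f j t = 0 := by
    intro i j hij t
    by_contra h
    have hi := hsmall i t (left_ne_zero_of_mul h)
    have hj := hsmall j t (right_ne_zero_of_mul h)
    have h1 := h2ε i j hij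
    have h2 : |c i - c j| ≤ |c i - t| + |t - c j| := abs_sub_le _ _ _
    rw [abs_sub_comm (c i) t] at h2
    linarith
  -- the elements
  set z : Fin (n+1) → B := fun i => cfcₙ (f i) b with hzdef
  have hz_mem : ∀ i, z i ∈ closure
      ((NonUnitalStarAlgebra.adjoin ℂ {b} : NonUnitalStarSubalgebra ℂ B) : Set B) :=
    fun i => cfcn_mem_closure_adjoin hsa (f i)
  have hz_sa : ∀ i, IsSelfAdjoint (z i) :=
    fun i => cfcₙ_predicate (f i) b
  have hz_sq : ∀ i, ∃ cc : B, z i = star cc * cc := by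
    intro i
    refine ⟨cfcₙ (fun t => Real.sqrt (f i t)) b, ?_⟩
    have hcont : ContinuousOn (fun t => Real.sqrt (f i t)) (quasispectrum ℝ b) :=
      (Real.continuous_sqrt.comp (hfc i)).continuousOn
    have h0 : Real.sqrt (f i 0) = 0 := by rw [hf0 i, Real.sqrt_zero]
    have hsa' : IsSelfAdjoint (cfcₙ (fun t => Real.sqrt (f i t)) b) :=
      cfcₙ_predicate _ b
    rw [hsa'.star_eq, ← cfcₙ_mul (fun t => Real.sqrt (f i t)) (fun t => Real.sqrt (f i t)) b
      hcont h0 hcont h0]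
    exact (cfcₙ_congr fun x _ => (Real.mul_self_sqrt (hf_nonneg i x))).symm
  have hz_norm : ∀ i, ‖z i‖ = 1 := by
    intro i
    refine le_antisymm ?_ ?_
    · refine norm_cfcₙ_le fun x hx => ?_
      rw [Real.norm_eq_abs, abs_of_nonneg (hf_nonneg i x)]
      exact hf_le_one i x
    · have := norm_apply_le_norm_cfcₙ (f i) b (hc_mem i) ((hfc i).continuousOn) (hf0 i) hsa
      rwa [hf1 i, norm_one] at this
  -- the sum
  set s : B := ∑ i : Fin (n+1), z i * z i with hsdef
  have hs_eq : cfcₙ (fun x => ∑ i : Fin (n+1), f i x * f i x) b = s := by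
    have h1 : (fun x => ∑ i : Fin (n+1), f i x * f i x)
        = ∑ i : Fin (n+1), (fun x => f i x * f i x) := by
      ext x; simp
    rw [h1, cfcₙ_sum (fun i x => f i x * f i x) b _ (fun i _ => ((hfc i).mul (hfc i)).continuousOn)
      (fun i _ => by simp [hf0 i])]
    exact Finset.sum_congr rfl fun i _ => cfcₙ_mul (f i) (f i) b
      ((hfc i).continuousOn) (hf0 i) ((hfc i).continuousOn) (hf0 i)
  have hptwise : ∀ x, (∑ i : Fin (n+1), f i x * f i x) ≤ 1 := by
    intro x
    by_cases hex : ∃ j, f j x ≠ 0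
    · obtain ⟨j, hj⟩ := hex
      have heq : ∑ i : Fin (n+1), f i x * f i x = f j x * f j x := by
        refine Finset.sum_eq_single_of_mem j (Finset.mem_univ j) ?_
        intro i _ hij
        rcases mul_eq_zero.mp (hdisj i j hij x) with h | h
        · rw [h, zero_mul]
        · exact absurd h hj
      rw [heq]
      calc f j x * f j x ≤ 1 * 1 :=
            mul_le_mul (hf_le_one j x) (hf_le_one j x) (hf_nonneg j x) zero_le_one
        _ = 1 := mul_one 1
    · push_neg at hex
      simp [hex]
  have hpt_nonneg : ∀ x, 0 ≤ ∑ i : Fin (n+1), f i x * f i x :=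
    fun x => Finset.sum_nonneg fun i _ => mul_nonneg (hf_nonneg i x) (hf_nonneg i x)
  have hs_norm : ‖s‖ ≤ 1 := by
    rw [← hs_eq]
    refine norm_cfcₙ_le fun x hx => ?_
    rw [Real.norm_eq_abs, abs_of_nonneg (hpt_nonneg x)]
    exact hptwise x
  have hρs : (ρ s).re ≤ 1 := by
    calc (ρ s).re ≤ ‖ρ s‖ := by
          exact Complex.re_le_norm _
      _ ≤ ‖ρ‖ * ‖s‖ := ρ.le_opNorm s
      _ ≤ 1 := by rw [hρ1, one_mul]; exact hs_norm
  have hterm_nonneg : ∀ i, 0 ≤ (ρ (z i * z i)).re := by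
    intro i
    have := (hρpos (z i)).1
    rwa [(hz_sa i).star_eq] at this
  have hsum_re : ∑ i : Fin (n+1), (ρ (z i * z i)).re = (ρ s).re := by
    rw [hsdef, map_sum, Complex.re_sum]
  have hexists : ∃ i : Fin (n+1), (ρ (z i * z i)).re ≤ 1/(n+1) := by
    by_contra hcon
    push_neg at hcon
    have h1 : ∑ _i : Fin (n+1), (1/(n+1 : ℝ)) = 1 := by
      rw [Finset.sum_const, Finset.card_univ, Fintype.card_fin, nsmul_eq_mul]
      push_cast
      field_simp
    have h2 := Finset.sum_lt_sum_of_nonempty (Finset.univ_nonempty) (fun i _ => hcon i)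
    rw [h1, hsum_re] at h2
    linarith
  obtain ⟨i, hi⟩ := hexists
  refine ⟨z i, hz_mem i, hz_sq i, hz_norm i, ?_⟩
  refine hi.trans ?_
  have hn' : (0:ℝ) < n := by exact_mod_cast hn
  apply one_div_le_one_div_of_le hn'
  linarith
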